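/- Let H be a complex separable Hilbert space and C : H → H an antilinear map. Then C is a conjugation if and only if there exists an orthonormal basis {f_n}_{n∈Λ} of H such that for every orthonormal basis {τ_n}_{n∈Λ} of H and every x = Σ_n a_n τ_n ∈ H one has C x = Σ_m ( Σ_n conj(a_n) · c_{n,m}^{(τ)} ) τ_m, where c_{n,m}^{(τ)} = Σ_k ⟨f_k, τ_n⟩ · ⟨f_k, τ_m⟩ for all m, n ∈ Λ (all series converging). Equivalently, ⟨C τ_n, τ_m⟩ = c_{n,m}^{(τ)} for all m, n ∈ Λ and every orthonormal basis {τ_n}. -/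

import Mathlib

noncomputable section
open scoped ComplexConjugate

/-- A conjugation on a complex Hilbert space: an antilinear, involutive, isometric map. -/
def IsConjugation {E : Type*} [NormedAddCommGroup E] [InnerProductSpace ℂ E] (C : E → E) : Prop :=
  (∀ (a : ℂ) (f g : E), C (a • f + g) = conj a • C f + C g) ∧
  (∀ f, C (C f) = f) ∧
  (∀ f, ‖C f‖ = ‖f‖)

/-- The inner product in the paper's convention: linear in the first argument and
conjugate-linear in the second (Mathlib's `inner` with the arguments swapped). -/
def ip {E : Type*} [NormedAddCommGroup E] [InnerProductSpace ℂ E] (x y : E) : ℂ :=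
  inner ℂ y x

namespace ConjAux

open Submodule Set

variable {H : Type*} [NormedAddCommGroup H] [InnerProductSpace ℂ H]

local notation "⟪" x ", " y "⟫" => @inner ℂ _ _ x y

section antilinear

variable {C : H → H} (hC : ∀ (a : ℂ) (f g : H), C (a • f + g) = conj a • C f + C g)
include hC

theorem C_zero : C 0 = 0 := by
  have h := hC 1 0 0
  simp only [smul_zero, add_zero, map_one, one_smul] at h
  exact (left_eq_add.mp h)

theorem C_add (x y : H) : C (x + y) = C x + C y := by
  have := hC 1 x y; simpa using this

theorem C_smul (a : ℂ) (x : H) : C (a • x) = conj a • C x := by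
  have := hC a x 0; simpa [C_zero hC] using this

theorem C_sub (x y : H) : C (x - y) = C x - C y := by
  have h := hC (-1) y x
  simp only [neg_smul, one_smul, map_neg, map_one] at h
  have h2 : x - y = -y + x := by abel
  rw [h2, h]
  abel

end antilinear

section conjugation

variable {C : H → H} (hCC : IsConjugation C)
include hCC

theorem C_isometry : Isometry C := by
  apply Isometry.of_dist_eq
  intro x y
  rw [dist_eq_norm, dist_eq_norm, ← C_sub hCC.1, hCC.2.2]

theorem re_inner_C (x y : H) :
    Complex.re ⟪C x, C y⟫ = Complex.re ⟪x, y⟫ := by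
  have h : ∀ u v : H, Complex.re ⟪u, v⟫ = (‖u + v‖ ^ 2 - ‖u‖ ^ 2 - ‖v‖ ^ 2) / 2 := by
    intro u v
    have h0 := norm_add_sq (𝕜 := ℂ) u v
    rw [h0, RCLike.re_to_complex]; ring
  rw [h, h, ← C_add hCC.1, hCC.2.2, hCC.2.2, hCC.2.2]

theorem inner_C (x y : H) : ⟪C x, C y⟫ = ⟪y, x⟫ := by
  have hyx : (⟪y, x⟫ : ℂ) = conj ⟪x, y⟫ := by
    rw [inner_conj_symm]
  apply Complex.ext
  · rw [re_inner_C hCC, hyx, Complex.conj_re]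
  · have h := re_inner_C hCC x ((-Complex.I) • y)
    rw [C_smul hCC.1] at h
    simp only [map_neg, Complex.conj_I, neg_neg] at h
    rw [inner_smul_right, inner_smul_right] at h
    simp only [Complex.mul_re, Complex.I_re, Complex.I_im, Complex.neg_re, Complex.neg_im] at h
    rw [hyx]
    simp only [Complex.conj_im]
    linarith

end conjugation

section countable

variable [TopologicalSpace.SeparableSpace H]

theorem countable_index_of_orthonormal {ι : Type*} {v : ι → H}
    (hv : Orthonormal ℂ v) : Countable ι := by
  apply Pairwise.countable_of_isOpen_disjoint (s := fun i => Metric.ball (v i) (1 / 2))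
  · intro i j hij
    apply Metric.ball_disjoint_ball
    rw [dist_eq_norm]
    have h2 : ‖v i - v j‖ ^ 2 = 2 := by
      rw [@norm_sub_sq ℂ, hv.2 hij, hv.1 i, hv.1 j]
      norm_num
    nlinarith [norm_nonneg (v i - v j)]
  · exact fun i => Metric.isOpen_ball
  · exact fun i => ⟨v i, by simp⟩

end countable

variable [CompleteSpace H]

section equiv

theorem card_eq_finrank_of_fd [FiniteDimensional ℂ H] {κ : Type*} (c : HilbertBasis κ ℂ H) :
    ∃ _ : Fintype κ, Fintype.card κ = Module.finrank ℂ H := by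
  have hli : LinearIndependent ℂ c := c.orthonormal.linearIndependent
  have hfin : Finite κ := hli.finite
  have hft : Fintype κ := Fintype.ofFinite κ
  refine ⟨hft, ?_⟩
  have hclosed : IsClosed ((Submodule.span ℂ (Set.range c)) : Set H) :=
    (Submodule.span ℂ (Set.range c)).closed_of_finiteDimensional
  have hsp : Submodule.span ℂ (Set.range c) = ⊤ := by
    have := c.dense_span
    rwa [hclosed.submodule_topologicalClosure_eq] at this
  have hb : Module.Basis κ ℂ H := Module.Basis.mk hli hsp.ge
  exact (Module.finrank_eq_card_basis hb).symm

theorem infinite_of_not_fd (hfd : ¬FiniteDimensional ℂ H) {κ : Type*}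
    (c : HilbertBasis κ ℂ H) : Infinite κ := by
  rw [← not_finite_iff_infinite]
  intro hfin
  apply hfd
  have hsf : FiniteDimensional ℂ (Submodule.span ℂ (Set.range c)) :=
    FiniteDimensional.span_of_finite ℂ (Set.finite_range c)
  have hclosed : IsClosed ((Submodule.span ℂ (Set.range c)) : Set H) :=
    (Submodule.span ℂ (Set.range c)).closed_of_finiteDimensional
  have hsp : Submodule.span ℂ (Set.range c) = ⊤ := by
    have := c.dense_span
    rwa [hclosed.submodule_topologicalClosure_eq] at this
  rw [hsp] at hsf
  exact FiniteDimensional.of_injective (Submodule.topEquiv.symm.toLinearMap)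
    Submodule.topEquiv.symm.injective

/-- Any Hilbert basis of a space with a countable Hilbert basis has equipotent index. -/
theorem index_equiv [TopologicalSpace.SeparableSpace H]
    {Λ : Type*} [Countable Λ] (b₀ : HilbertBasis Λ ℂ H)
    {ι : Type*} (b : HilbertBasis ι ℂ H) : Nonempty (ι ≃ Λ) := by
  haveI hcι : Countable ι := countable_index_of_orthonormal b.orthonormal
  by_cases hfd : FiniteDimensional ℂ H
  · obtain ⟨ft1, hc1⟩ := card_eq_finrank_of_fd b
    obtain ⟨ft2, hc2⟩ := card_eq_finrank_of_fd b₀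
    exact ⟨Fintype.equivOfCardEq (by rw [hc1, hc2])⟩
  · haveI := infinite_of_not_fd hfd b
    haveI := infinite_of_not_fd hfd b₀
    exact inferInstance

/-- Reindexing a Hilbert basis along an equivalence. -/
def reindex {ι Λ : Type*} (b : HilbertBasis ι ℂ H) (e : ι ≃ Λ) : HilbertBasis Λ ℂ H :=
  HilbertBasis.mk (b.orthonormal.comp e.symm e.symm.injective)
    (by
      rw [Set.range_comp, Equiv.range_eq_univ, Set.image_univ]
      exact b.dense_span.ge)

@[simp] theorem reindex_apply {ι Λ : Type*} (b : HilbertBasis ι ℂ H) (e : ι ≃ Λ) (n : Λ) :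
    reindex b e n = b (e.symm n) := by
  have : ⇑(reindex b e) = b ∘ e.symm := HilbertBasis.coe_mk _ _
  rw [this]; rfl

end equiv

section fixedbasis

variable [TopologicalSpace.SeparableSpace H]

theorem exists_fixed_hilbertBasis {Λ : Type*} [Countable Λ] (b₀ : HilbertBasis Λ ℂ H)
    {C : H → H} (hCC : IsConjugation C) :
    ∃ f : HilbertBasis Λ ℂ H, ∀ n, C (f n) = f n := by
  classical
  obtain ⟨S, -, hmax⟩ := zorn_subset_nonempty
      {s : Set H | Orthonormal ℂ (Subtype.val : s → H) ∧ ∀ x ∈ s, C x = x}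
      (fun c hc cc _c0 => ⟨⋃₀ c,
        ⟨orthonormal_sUnion_of_directed cc.directedOn (fun x xc => (hc xc).1),
         fun x hx => by
          obtain ⟨t, htc, hxt⟩ := hx
          exact (hc htc).2 x hxt⟩,
        fun s hs => Set.subset_sUnion_of_mem hs⟩)
      ∅ ⟨orthonormal_empty ℂ H, by simp⟩
  have hS : Orthonormal ℂ (Subtype.val : S → H) := hmax.1.1
  have hfix : ∀ x ∈ S, C x = x := hmax.1.2
  have hSmax : ∀ u ∈ {s : Set H | Orthonormal ℂ (Subtype.val : s → H) ∧ ∀ x ∈ s, C x = x},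
      S ⊆ u → u = S := fun u hu hsu => hmax.eq_of_ge hu hsu
  -- show the orthogonal complement of the span of S is trivial
  have hbot : (Submodule.span ℂ S)ᗮ = ⊥ := by
    by_contra hne
    obtain ⟨x, hxV, hx0⟩ := Submodule.exists_mem_ne_zero_of_ne_bot hne
    have hxS : ∀ e ∈ S, ⟪e, x⟫ = 0 := fun e he =>
      (Submodule.mem_orthogonal _ x).mp hxV e (Submodule.subset_span he)
    have hCxS : ∀ e ∈ S, ⟪e, C x⟫ = 0 := by
      intro e he
      have h1 : ⟪e, C x⟫ = ⟪C e, C x⟫ := by rw [hfix e he]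
      rw [h1, inner_C hCC, ← inner_conj_symm, hxS e he, map_zero]
    -- construct a fixed nonzero vector orthogonal to S
    obtain ⟨w, hw0, hwfix, hwS⟩ :
        ∃ w : H, w ≠ 0 ∧ C w = w ∧ ∀ e ∈ S, ⟪e, w⟫ = 0 := by
      by_cases hxC : x + C x = 0
      · refine ⟨Complex.I • x, ?_, ?_, ?_⟩
        · exact smul_ne_zero Complex.I_ne_zero hx0
        · have hCx : C x = -x := by
            have := hxC
            linear_combination (norm := module) this
          rw [C_smul hCC.1, Complex.conj_I, hCx]
          module
        · intro e he
          rw [inner_smul_right, hxS e he, mul_zero]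
      · refine ⟨x + C x, hxC, ?_, ?_⟩
        · rw [C_add hCC.1, hCC.2.1]
          abel
        · intro e he
          rw [inner_add_right, hxS e he, hCxS e he, add_zero]
    set u : H := ‖w‖⁻¹ • w with hu_def
    have hu1 : ‖u‖ = 1 := norm_smul_inv_norm hw0
    have huS : ∀ e ∈ S, ⟪e, u⟫ = 0 := by
      intro e he
      rw [hu_def, RCLike.real_smul_eq_coe_smul (K := ℂ), inner_smul_right, hwS e he, mul_zero]
    have hufix : C u = u := by
      rw [hu_def, RCLike.real_smul_eq_coe_smul (K := ℂ), C_smul hCC.1, hwfix,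
        RCLike.conj_ofReal]
    have huNotS : u ∉ S := by
      intro huS'
      have h0 : ⟪u, u⟫ = (0 : ℂ) := huS u huS'
      rw [inner_self_eq_zero] at h0
      rw [h0, norm_zero] at hu1
      norm_num at hu1
    have hins : (insert u S) ∈
        {s : Set H | Orthonormal ℂ (Subtype.val : s → H) ∧ ∀ x ∈ s, C x = x} := by
      constructor
      · rw [orthonormal_subtype_iff_ite]
        intro v hv z hz
        rcases hv with rfl | hvS
        · rcases hz with rfl | hzS
          · rw [if_pos rfl, inner_self_eq_norm_sq_to_K, hu1]
            norm_num
          · rw [if_neg (by rintro rfl; exact huNotS hzS), ← inner_conj_symm,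
              huS z hzS, map_zero]
        · rcases hz with rfl | hzS
          · rw [if_neg (by rintro rfl; exact huNotS hvS), huS v hvS]
          · exact (orthonormal_subtype_iff_ite.mp hS) v hvS z hzS
      · intro y hy
        rcases hy with rfl | hyS
        · exact hufix
        · exact hfix y hyS
    have := hSmax _ hins (Set.subset_insert u S)
    exact huNotS (this ▸ Set.mem_insert u S)
  -- build the Hilbert basis indexed by S
  have hsp : (Submodule.span ℂ (Set.range (Subtype.val : S → H)))ᗮ = ⊥ := by
    rwa [Subtype.range_coe]
  let b' : HilbertBasis S ℂ H := HilbertBasis.mkOfOrthogonalEqBot hS hsp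
  have hb' : ⇑b' = (Subtype.val : S → H) := HilbertBasis.coe_mkOfOrthogonalEqBot hS hsp
  obtain ⟨e⟩ := index_equiv b₀ b'
  refine ⟨reindex b' e, fun n => ?_⟩
  rw [reindex_apply, hb']
  exact hfix _ (e.symm n).2

theorem matrix_coeff_of_fixed {C : H → H} (hCC : IsConjugation C)
    {Λ : Type*} (f τ : HilbertBasis Λ ℂ H) (hf : ∀ n, C (f n) = f n) (m n : Λ) :
    ⟪τ m, C (τ n)⟫ = ∑' k, ⟪τ n, f k⟫ * ⟪τ m, f k⟫ := by
  have h1 : HasSum (fun k => f.repr (τ n) k • f k) (τ n) := f.hasSum_repr (τ n)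
  have hCcont : Continuous C := (C_isometry hCC).continuous
  let Chom : H →+ H := AddMonoidHom.mk' C (C_add hCC.1)
  have h2 : HasSum (fun k => C (f.repr (τ n) k • f k)) (C (τ n)) := h1.map Chom hCcont
  have h3 : HasSum (fun k => (⟪τ n, f k⟫ : ℂ) • f k) (C (τ n)) := by
    convert h2 using 2 with k
    rw [C_smul hCC.1, hf k, f.repr_apply_apply, inner_conj_symm]
  have h4 := h3.mapL (innerSL ℂ (τ m))
  have h5 : HasSum (fun k => (⟪τ n, f k⟫ : ℂ) * ⟪τ m, f k⟫) ⟪τ m, C (τ n)⟫ := by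
    convert h4 using 2 with k
    · rfl
    rw [innerSL_apply_apply, inner_smul_right, mul_comm]
    rw [innerSL_apply_apply]
  exact h5.tsum_eq.symm

end fixedbasis

section reverse

variable [TopologicalSpace.SeparableSpace H] {Λ : Type*} [Countable Λ]

theorem exists_hilbertBasis_of_unit (b₀ : HilbertBasis Λ ℂ H) {u : H} (hu : ‖u‖ = 1) :
    ∃ (τ : HilbertBasis Λ ℂ H) (n₀ : Λ), τ n₀ = u := by
  classical
  have hS : Orthonormal ℂ (Subtype.val : ({u} : Set H) → H) := by
    rw [orthonormal_subtype_iff_ite]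
    intro v hv z hz
    rw [Set.mem_singleton_iff] at hv hz
    subst hv; subst hz
    rw [if_pos rfl, inner_self_eq_norm_sq_to_K, hu]
    norm_num
  obtain ⟨w, b, hsub, hcoe⟩ := hS.exists_hilbertBasis_extension
  obtain ⟨e⟩ := index_equiv b₀ b
  refine ⟨reindex b e, e ⟨u, hsub rfl⟩, ?_⟩
  rw [reindex_apply, Equiv.symm_apply_apply]
  rw [show ⇑b = (Subtype.val : w → H) from hcoe]

/-- The canonical conjugation associated to a Hilbert basis. -/
def Jmap {Λ : Type*} (f : HilbertBasis Λ ℂ H) : H → H :=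
  fun x => f.repr.symm (star (f.repr x))

variable (f : HilbertBasis Λ ℂ H)

theorem Jmap_zero : Jmap f 0 = 0 := by simp [Jmap]

theorem Jmap_antilinear (a : ℂ) (x y : H) :
    Jmap f (a • x + y) = conj a • Jmap f x + Jmap f y := by
  unfold Jmap
  rw [map_add, map_smul, star_add, star_smul, map_add, map_smul]
  rfl

theorem Jmap_invol (x : H) : Jmap f (Jmap f x) = x := by
  simp [Jmap]

theorem Jmap_norm (x : H) : ‖Jmap f x‖ = ‖x‖ := by
  rw [Jmap, f.repr.symm.norm_map, norm_star, f.repr.norm_map]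

theorem Jmap_smul (a : ℂ) (x : H) : Jmap f (a • x) = conj a • Jmap f x := by
  have := Jmap_antilinear f a x 0
  simpa [Jmap_zero] using this

theorem inner_Jmap (x y : H) : ⟪y, Jmap f x⟫ = ∑' k, ⟪x, f k⟫ * ⟪y, f k⟫ := by
  have h1 : HasSum (fun k => (star (f.repr x)) k • f k) (Jmap f x) :=
    f.hasSum_repr_symm (star (f.repr x))
  have h2 := h1.mapL (innerSL ℂ y)
  have h3 : HasSum (fun k => (⟪x, f k⟫ : ℂ) * ⟪y, f k⟫) ⟪y, Jmap f x⟫ := by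
    convert h2 using 2 with k
    · rfl
    rw [innerSL_apply_apply, inner_smul_right, lp.star_apply, f.repr_apply_apply,
      RCLike.star_def, inner_conj_symm, mul_comm]
    rw [innerSL_apply_apply]
  exact h3.tsum_eq.symm

theorem isConjugation_of_coeffs (b₀ : HilbertBasis Λ ℂ H) {C : H → H}
    (hC : ∀ (a : ℂ) (x y : H), C (a • x + y) = conj a • C x + C y)
    (hf : ∀ (τ : HilbertBasis Λ ℂ H) (m n : Λ),
      ⟪τ m, C (τ n)⟫ = ∑' k, ⟪τ n, f k⟫ * ⟪τ m, f k⟫) :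
    IsConjugation C := by
  have hCJ : C = Jmap f := by
    funext x
    by_cases hx : x = 0
    · subst hx
      rw [C_zero hC, Jmap_zero]
    · set u : H := ‖x‖⁻¹ • x with hu_def
      have hu : ‖u‖ = 1 := norm_smul_inv_norm hx
      obtain ⟨τ, n₀, hτ⟩ := exists_hilbertBasis_of_unit b₀ hu
      have hCu : C u = Jmap f u := by
        refine τ.repr.injective (lp.ext (funext fun m => ?_))
        rw [τ.repr_apply_apply, τ.repr_apply_apply]
        have h1 : ⟪τ m, C u⟫ = ∑' k, (⟪u, f k⟫ : ℂ) * ⟪τ m, f k⟫ := by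
          conv_lhs => rw [← hτ]
          rw [hf τ m n₀, hτ]
        rw [h1, inner_Jmap]
      have hsm : ∀ (r : ℝ) (y : H), (r : ℂ) • y = r • y := fun r y =>
        (RCLike.real_smul_eq_coe_smul (K := ℂ) r y).symm
      have hxu : x = (‖x‖ : ℂ) • u := by
        rw [hsm, hu_def, smul_smul, mul_inv_cancel₀ (norm_ne_zero_iff.mpr hx), one_smul]
      calc C x = C ((‖x‖ : ℂ) • u + 0) := by rw [add_zero, ← hxu]
        _ = conj (‖x‖ : ℂ) • C u + C 0 := hC _ _ _
        _ = (‖x‖ : ℂ) • Jmap f u := by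
            rw [C_zero hC, hCu, add_zero, Complex.conj_ofReal]
        _ = conj (‖x‖ : ℂ) • Jmap f u := by rw [Complex.conj_ofReal]
        _ = Jmap f ((‖x‖ : ℂ) • u) := (Jmap_smul f _ _).symm
        _ = Jmap f x := by rw [← hxu]
  refine ⟨hC, fun y => ?_, fun y => ?_⟩
  · rw [hCJ, Jmap_invol]
  · rw [hCJ, Jmap_norm]

end reverse

end ConjAux

end

noncomputable section
open scoped ComplexConjugate

theorem isConjugation_iff_matrix_coefficients
    {H : Type*} [NormedAddCommGroup H] [InnerProductSpace ℂ H] [CompleteSpace H]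
    [TopologicalSpace.SeparableSpace H] {Λ : Type*} [Countable Λ]
    (b₀ : HilbertBasis Λ ℂ H)
    (C : H → H)
    (hC : ∀ (a : ℂ) (f g : H), C (a • f + g) = conj a • C f + C g) :
    IsConjugation C ↔
      ∃ f : HilbertBasis Λ ℂ H, ∀ (τ : HilbertBasis Λ ℂ H) (m n : Λ),
        ip (C (τ n)) (τ m) = ∑' k : Λ, ip (f k) (τ n) * ip (f k) (τ m) := by
  simp only [ip]
  constructor
  · intro hCC
    obtain ⟨f, hf⟩ := ConjAux.exists_fixed_hilbertBasis b₀ hCC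
    exact ⟨f, fun τ m n => ConjAux.matrix_coeff_of_fixed hCC f τ hf m n⟩
  · rintro ⟨f, hf⟩
    exact ConjAux.isConjugation_of_coeffs f b₀ hC hf

end
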